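/- Let N ≥ 5, let a_1,…,a_n ∈ ℝ^N be distinct, let 4-N ≤ s < 0, and let φ_s(x) = Π_{i=1}^n |x-a_i|^{s/n}. Then -Δφ_s(x) = (s(2-N-s)/n) φ_s(x) Σ_{i=1}^n 1/|x-a_i|² + (s²/n²) φ_s(x) Σ_{1≤i<j≤n} |a_i-a_j|²/(|x-a_i|²|x-a_j|²) ≥ 0 for all x ∉ {a_1,…,a_n}; in particular φ_s is superharmonic away from the poles. -/

import Mathlib

open MeasureTheory

noncomputable def lap {N : ℕ} (f : EuclideanSpace ℝ (Fin N) → ℝ)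
    (x : EuclideanSpace ℝ (Fin N)) : ℝ :=
  ∑ i, fderiv ℝ (fun y => fderiv ℝ f y (EuclideanSpace.single i 1)) x
    (EuclideanSpace.single i 1)

noncomputable section MPaux
variable {N n : ℕ}
local notation "E" => EuclideanSpace ℝ (Fin N)

lemma MP.hasFDerivAt_normsq (a x : E) :
    HasFDerivAt (fun y : E => ‖y - a‖ ^ 2) ((2 : ℝ) • innerSL ℝ (x - a)) x := by
  have h := ((hasFDerivAt_id x).sub_const a).norm_sq
  refine h.congr_fderiv (Eq.symm ?_)
  ext v
  simp [two_smul]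

lemma MP.hasFDerivAt_norm_rpow (a x : E) (hx : x ≠ a) (p : ℝ) :
    HasFDerivAt (fun y : E => ‖y - a‖ ^ p)
      ((p * ‖x - a‖ ^ (p - 2)) • innerSL ℝ (x - a)) x := by
  have hr : (0:ℝ) < ‖x - a‖ := by
    rw [norm_pos_iff]; exact sub_ne_zero.mpr hx
  have hr2 : (0:ℝ) < ‖x - a‖ ^ 2 := by positivity
  have h1 := MP.hasFDerivAt_normsq a x
  have h2 : HasDerivAt (fun t : ℝ => t ^ (p/2)) ((p/2) * (‖x - a‖ ^ 2) ^ (p/2 - 1))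
      (‖x - a‖ ^ 2) := Real.hasDerivAt_rpow_const (Or.inl hr2.ne')
  have h3 := h2.comp_hasFDerivAt x h1
  have hfun : ((fun t : ℝ => t ^ (p/2)) ∘ fun y : E => ‖y - a‖ ^ 2)
      = fun y : E => ‖y - a‖ ^ p := by
    funext y
    simp only [Function.comp_apply]
    rw [← Real.rpow_natCast ‖y - a‖ 2, ← Real.rpow_mul (norm_nonneg _)]
    norm_num
    congr 1
    ring
  rw [hfun] at h3
  refine h3.congr_fderiv (Eq.symm ?_)
  rw [smul_smul]
  congr 1
  rw [← Real.rpow_natCast ‖x - a‖ 2, ← Real.rpow_mul hr.le]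
  push_cast
  rw [show (2:ℝ)*(p/2-1) = p-2 by ring]
  ring


/-- Derivative of the multipolar product. -/
lemma MP.hasFDerivAt_prod (a : Fin n → E) (p : ℝ) (x : E) (hx : ∀ i, x ≠ a i) :
    HasFDerivAt (fun y : E => ∏ i, ‖y - a i‖ ^ p)
      (∑ i, (((∏ j, ‖x - a j‖ ^ p) * p / ‖x - a i‖ ^ 2) • innerSL ℝ (x - a i))) x := by
  have hr : ∀ i, (0:ℝ) < ‖x - a i‖ := fun i => by
    rw [norm_pos_iff]; exact sub_ne_zero.mpr (hx i)
  have h := HasFDerivAt.finset_prod (u := Finset.univ)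
    (g := fun i y => ‖y - a i‖ ^ p)
    (g' := fun i => (p * ‖x - a i‖ ^ (p - 2)) • innerSL ℝ (x - a i))
    (fun i _ => MP.hasFDerivAt_norm_rpow (a i) x (hx i) p)
  refine h.congr_fderiv (Eq.symm ?_)
  refine Finset.sum_congr rfl fun i _ => ?_
  rw [smul_smul]
  congr 1
  have hprod : (∏ j, ‖x - a j‖ ^ p)
      = (∏ j ∈ Finset.univ.erase i, ‖x - a j‖ ^ p) * ‖x - a i‖ ^ p := by
    rw [Finset.prod_erase_mul _ _ (Finset.mem_univ i)]
  rw [hprod]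
  have h2 : ‖x - a i‖ ^ (p - 2) = ‖x - a i‖ ^ p / ‖x - a i‖ ^ 2 := by
    rw [Real.rpow_sub (hr i), ← Real.rpow_natCast ‖x - a i‖ 2]
    norm_num
  rw [h2]
  have := (hr i)
  have h3 : (‖x - a i‖:ℝ) ^ p ≠ 0 := (Real.rpow_pos_of_pos (hr i) p).ne'
  field_simp

lemma MP.lap_eq (a : Fin n → E) (p : ℝ) (x : E) (hx : ∀ i, x ≠ a i) :
    lap (fun y => ∏ i, ‖y - a i‖ ^ p) x
      = (∏ l, ‖x - a l‖ ^ p) *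
          (p ^ 2 * ∑ i, ∑ j,
              (inner ℝ (x - a i) (x - a j) : ℝ) / (‖x - a i‖ ^ 2 * ‖x - a j‖ ^ 2)
            + p * ((N : ℝ) - 2) * ∑ i, 1 / ‖x - a i‖ ^ 2) := by
  classical
  have hr2 : ∀ i, (‖x - a i‖ ^ 2 : ℝ) ≠ 0 := fun i => by
    have : (0:ℝ) < ‖x - a i‖ := by rw [norm_pos_iff]; exact sub_ne_zero.mpr (hx i)
    positivity
  have hsub : ∀ (i : Fin n) (k : Fin N), (x - a i) k = x k - a i k := fun _ _ => rfl
  have hinner : ∀ i j : Fin n,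
      ∑ k, (x k - a i k) * (x k - a j k) = (inner ℝ (x - a i) (x - a j) : ℝ) := by
    intro i j
    rw [PiLp.inner_apply]
    refine Finset.sum_congr rfl fun k _ => ?_
    simp [RCLike.inner_apply, hsub]
    ring
  -- the open set where things are smooth
  have hUopen : IsOpen ((Set.range a)ᶜ : Set (EuclideanSpace ℝ (Fin N))) :=
    (Set.finite_range a).isClosed.isOpen_compl
  have hxU : x ∈ ((Set.range a)ᶜ : Set (EuclideanSpace ℝ (Fin N))) := by
    intro h; obtain ⟨i, hi⟩ := h; exact hx i hi.symm
  -- first derivative formula on U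
  have hfd : ∀ y : E, (∀ i, y ≠ a i) → ∀ k : Fin N,
      fderiv ℝ (fun z : E => ∏ i, ‖z - a i‖ ^ p) y (EuclideanSpace.single k 1)
        = ∑ i, p * ((∏ j, ‖y - a j‖ ^ p) * ((‖y - a i‖ ^ 2)⁻¹ * (y k - a i k))) := by
    intro y hy k
    rw [(MP.hasFDerivAt_prod a p y hy).fderiv]
    simp only [ContinuousLinearMap.coe_sum', Finset.sum_apply,
      ContinuousLinearMap.coe_smul', Pi.smul_apply, innerSL_apply_apply,
      EuclideanSpace.inner_single_right, RCLike.conj_to_real, smul_eq_mul]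
    refine Finset.sum_congr rfl fun i _ => ?_
    have h' : (y - a i) k = y k - a i k := rfl
    rw [h']
    ring
  have hev : ∀ k : Fin N,
      fderiv ℝ (fun y => fderiv ℝ (fun z : E => ∏ i, ‖z - a i‖ ^ p) y
          (EuclideanSpace.single k 1)) x
        = fderiv ℝ (fun y : E => ∑ i, p * ((∏ j, ‖y - a j‖ ^ p) *
            ((‖y - a i‖ ^ 2)⁻¹ * (y k - a i k)))) x := by
    intro k
    refine Filter.EventuallyEq.fderiv_eq ?_
    filter_upwards [hUopen.mem_nhds hxU] with y hy
    exact hfd y (fun i h => hy ⟨i, h.symm⟩) k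
  -- second derivative evaluation
  have hsnd : ∀ k : Fin N,
      fderiv ℝ (fun y : E => ∑ i, p * ((∏ j, ‖y - a j‖ ^ p) *
          ((‖y - a i‖ ^ 2)⁻¹ * (y k - a i k)))) x (EuclideanSpace.single k 1)
        = ∑ i, p * ((∏ l, ‖x - a l‖ ^ p) * ((‖x - a i‖ ^ 2)⁻¹
              - 2 * (x k - a i k)^2 * ((‖x - a i‖ ^ 2)^2)⁻¹)
            + ((‖x - a i‖ ^ 2)⁻¹ * (x k - a i k))
              * ∑ j, ((∏ l, ‖x - a l‖ ^ p) * p / ‖x - a j‖ ^ 2) * (x k - a j k)) := by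
    intro k
    have hD := MP.hasFDerivAt_prod a p x hx
    have hinv : ∀ i, HasFDerivAt (fun y : E => (‖y - a i‖ ^ 2)⁻¹)
        ((-((‖x - a i‖ ^ 2) ^ 2)⁻¹) • ((2 : ℝ) • innerSL ℝ (x - a i))) x := by
      intro i
      have h := (hasDerivAt_inv (hr2 i)).comp_hasFDerivAt x (MP.hasFDerivAt_normsq (a i) x)
      exact h
    have hcoord : ∀ i, HasFDerivAt (fun y : E => y k - a i k)
        (PiLp.proj (𝕜 := ℝ) 2 (fun _ : Fin N => ℝ) k) x := by
      intro i
      exact HasFDerivAt.sub_const (c := a i k)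
        ((PiLp.proj (𝕜 := ℝ) 2 (fun _ : Fin N => ℝ) k).hasFDerivAt (x := x))
    have H := HasFDerivAt.fun_sum (u := Finset.univ)
      (fun i _ => ((hD.mul ((hinv i).mul (hcoord i))).const_mul p))
    rw [(show HasFDerivAt (fun y : E => ∑ i, p * ((∏ j, ‖y - a j‖ ^ p) *
        ((‖y - a i‖ ^ 2)⁻¹ * (y k - a i k)))) _ x from H).fderiv]
    simp only [ContinuousLinearMap.coe_sum', Finset.sum_apply,
      ContinuousLinearMap.coe_smul', Pi.smul_apply, ContinuousLinearMap.add_apply,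
      innerSL_apply_apply, EuclideanSpace.inner_single_right, RCLike.conj_to_real,
      smul_eq_mul, PiLp.proj_apply, EuclideanSpace.single_apply,
      ContinuousLinearMap.smul_apply, hsub, eq_self_iff_true, if_true, one_mul, Pi.mul_apply]
    refine Finset.sum_congr rfl fun i _ => ?_
    generalize (∑ j : Fin n, ((∏ l : Fin n, ‖x - a l‖ ^ p) * p / ‖x - a j‖ ^ 2)
      * (x k - a j k)) = S
    ring
  -- now assemble
  calc lap (fun y => ∏ i, ‖y - a i‖ ^ p) x
      = ∑ k : Fin N, ∑ i, p * ((∏ l, ‖x - a l‖ ^ p) * ((‖x - a i‖ ^ 2)⁻¹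
              - 2 * (x k - a i k)^2 * ((‖x - a i‖ ^ 2)^2)⁻¹)
            + ((‖x - a i‖ ^ 2)⁻¹ * (x k - a i k))
              * ∑ j, ((∏ l, ‖x - a l‖ ^ p) * p / ‖x - a j‖ ^ 2) * (x k - a j k)) := by
        simp only [lap]
        exact Finset.sum_congr rfl fun k _ => by rw [hev k, hsnd k]
    _ = ∑ i, (((N:ℝ) * (p * (∏ l, ‖x - a l‖ ^ p) * ((‖x - a i‖ ^ 2)⁻¹))
            - 2 * p * (∏ l, ‖x - a l‖ ^ p) * ((‖x - a i‖ ^ 2)^2)⁻¹ * ‖x - a i‖ ^ 2)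
          + ∑ j, (p * ((‖x - a i‖ ^ 2)⁻¹) * ((∏ l, ‖x - a l‖ ^ p) * p / ‖x - a j‖ ^ 2))
              * (inner ℝ (x - a i) (x - a j) : ℝ)) := by
        rw [Finset.sum_comm]
        refine Finset.sum_congr rfl fun i _ => ?_
        have h1 : ∑ k : Fin N, (x k - a i k)^2 = ‖x - a i‖ ^ 2 := by
          have h := hinner i i
          rw [real_inner_self_eq_norm_sq] at h
          simpa [sq] using h
        calc ∑ k : Fin N, p * ((∏ l, ‖x - a l‖ ^ p) * ((‖x - a i‖ ^ 2)⁻¹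
                - 2 * (x k - a i k)^2 * ((‖x - a i‖ ^ 2)^2)⁻¹)
              + ((‖x - a i‖ ^ 2)⁻¹ * (x k - a i k))
                * ∑ j, ((∏ l, ‖x - a l‖ ^ p) * p / ‖x - a j‖ ^ 2) * (x k - a j k))
            = ∑ k : Fin N, ((p * (∏ l, ‖x - a l‖ ^ p) * ((‖x - a i‖ ^ 2)⁻¹)
                - 2 * p * (∏ l, ‖x - a l‖ ^ p) * ((‖x - a i‖ ^ 2)^2)⁻¹ * (x k - a i k)^2)
              + ∑ j, (p * ((‖x - a i‖ ^ 2)⁻¹) * ((∏ l, ‖x - a l‖ ^ p) * p / ‖x - a j‖ ^ 2))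
                  * ((x k - a i k) * (x k - a j k))) := by
              refine Finset.sum_congr rfl fun k _ => ?_
              rw [Finset.mul_sum, mul_add, Finset.mul_sum]
              congr 1
              · ring
              · exact Finset.sum_congr rfl fun j _ => by ring
          _ = _ := by
              rw [Finset.sum_add_distrib, Finset.sum_sub_distrib, Finset.sum_const,
                Finset.card_univ, Fintype.card_fin, nsmul_eq_mul, ← Finset.mul_sum, h1,
                Finset.sum_comm]
              congr 1
              exact Finset.sum_congr rfl fun j _ => by rw [← Finset.mul_sum, hinner i j]
    _ = ∑ i, ((∏ l, ‖x - a l‖ ^ p) * (p * ((N:ℝ) - 2)) * (1 / ‖x - a i‖ ^ 2)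
          + (∏ l, ‖x - a l‖ ^ p) * p ^ 2 * ∑ j,
              (inner ℝ (x - a i) (x - a j) : ℝ) / (‖x - a i‖ ^ 2 * ‖x - a j‖ ^ 2)) := by
        refine Finset.sum_congr rfl fun i _ => ?_
        congr 1
        · field_simp [hr2 i]
        · rw [Finset.mul_sum]
          refine Finset.sum_congr rfl fun j _ => ?_
          field_simp [hr2 i, hr2 j]
    _ = _ := by
        rw [Finset.sum_add_distrib, ← Finset.mul_sum, ← Finset.mul_sum]
        ring
-- symmetric double-sum identity
lemma MP.sum_sym (f : Fin n → Fin n → ℝ) (hsym : ∀ i j, f i j = f j i)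
    (hdiag : ∀ i, f i i = 0) :
    ∑ i, ∑ j, f i j = 2 * ∑ i, ∑ j, (if i < j then f i j else 0) := by
  classical
  have hdec : ∀ i j : Fin n, f i j
      = (if i < j then f i j else 0) + (if j < i then f i j else 0) := by
    intro i j
    rcases lt_trichotomy i j with h | h | h
    · simp [h, h.asymm]
    · simp [h, hdiag]
    · simp [h, h.asymm]
  calc ∑ i, ∑ j, f i j
      = ∑ i, ∑ j, ((if i < j then f i j else 0) + (if j < i then f i j else 0)) := by
        exact Finset.sum_congr rfl fun i _ => Finset.sum_congr rfl fun j _ => hdec i j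
    _ = ∑ i, ∑ j, (if i < j then f i j else 0) + ∑ i, ∑ j, (if j < i then f i j else 0) := by
        rw [← Finset.sum_add_distrib]
        exact Finset.sum_congr rfl fun i _ => Finset.sum_add_distrib
    _ = 2 * ∑ i, ∑ j, (if i < j then f i j else 0) := by
        have : ∑ i, ∑ j, (if j < i then f i j else 0)
            = ∑ i, ∑ j, (if i < j then f i j else 0) := by
          rw [Finset.sum_comm]
          exact Finset.sum_congr rfl fun i _ => Finset.sum_congr rfl fun j _ => by
            rw [hsym]
        rw [this]; ring

lemma MP.S2_eq (a : Fin n → E) (x : E) (hx : ∀ i, x ≠ a i) :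
    ∑ i, ∑ j, (inner ℝ (x - a i) (x - a j) : ℝ) / (‖x - a i‖ ^ 2 * ‖x - a j‖ ^ 2)
      = (n : ℝ) * ∑ i, 1 / ‖x - a i‖ ^ 2
        - ∑ i, ∑ j, (if i < j then
            ‖a i - a j‖ ^ 2 / (‖x - a i‖ ^ 2 * ‖x - a j‖ ^ 2) else 0) := by
  classical
  have hr2 : ∀ i, (‖x - a i‖ ^ 2 : ℝ) ≠ 0 := fun i => by
    have : (0:ℝ) < ‖x - a i‖ := by rw [norm_pos_iff]; exact sub_ne_zero.mpr (hx i)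
    positivity
  have hkey : ∀ i j : Fin n, (inner ℝ (x - a i) (x - a j) : ℝ)
      = (‖x - a i‖ ^ 2 + ‖x - a j‖ ^ 2 - ‖a i - a j‖ ^ 2) / 2 := by
    intro i j
    have h := @norm_sub_sq_real (EuclideanSpace ℝ (Fin N)) _ _ (x - a i) (x - a j)
    have e : (x - a i) - (x - a j) = a j - a i := by abel
    rw [e, norm_sub_rev] at h
    linarith
  have hsym : ∀ i j : Fin n,
      ‖a i - a j‖ ^ 2 / (‖x - a i‖ ^ 2 * ‖x - a j‖ ^ 2)
        = ‖a j - a i‖ ^ 2 / (‖x - a j‖ ^ 2 * ‖x - a i‖ ^ 2) := by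
    intro i j; rw [norm_sub_rev, mul_comm]
  have hdiag : ∀ i : Fin n, ‖a i - a i‖ ^ 2 / (‖x - a i‖ ^ 2 * ‖x - a i‖ ^ 2) = 0 := by
    intro i; simp
  have hsum := MP.sum_sym (n := n)
    (fun i j => ‖a i - a j‖ ^ 2 / (‖x - a i‖ ^ 2 * ‖x - a j‖ ^ 2))
    (fun i j => hsym i j) hdiag
  calc ∑ i, ∑ j, (inner ℝ (x - a i) (x - a j) : ℝ) / (‖x - a i‖ ^ 2 * ‖x - a j‖ ^ 2)
      = ∑ i, ∑ j, ((1/2) * (1 / ‖x - a j‖ ^ 2) + (1/2) * (1 / ‖x - a i‖ ^ 2)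
          - (1/2) * (‖a i - a j‖ ^ 2 / (‖x - a i‖ ^ 2 * ‖x - a j‖ ^ 2))) := by
        refine Finset.sum_congr rfl fun i _ => Finset.sum_congr rfl fun j _ => ?_
        rw [hkey i j]
        field_simp [hr2 i, hr2 j, norm_ne_zero_iff.mpr (sub_ne_zero.mpr (hx i)),
          norm_ne_zero_iff.mpr (sub_ne_zero.mpr (hx j))]
    _ = ∑ i, ∑ j, ((1/2) * (1 / ‖x - a j‖ ^ 2) + (1/2) * (1 / ‖x - a i‖ ^ 2))
        - (1/2) * ∑ i, ∑ j, (‖a i - a j‖ ^ 2 / (‖x - a i‖ ^ 2 * ‖x - a j‖ ^ 2)) := by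
        rw [Finset.mul_sum]
        rw [← Finset.sum_sub_distrib]
        refine Finset.sum_congr rfl fun i _ => ?_
        rw [Finset.mul_sum, ← Finset.sum_sub_distrib]
    _ = _ := by
        beta_reduce at hsum
        rw [hsum]
        have h1 : ∑ i : Fin n, ∑ j : Fin n,
            ((1/2) * (1 / ‖x - a j‖ ^ 2) + (1/2) * (1 / ‖x - a i‖ ^ 2))
            = (n:ℝ) * ∑ i, 1 / ‖x - a i‖ ^ 2 := by
          calc ∑ i : Fin n, ∑ j : Fin n,
              ((1/2) * (1 / ‖x - a j‖ ^ 2) + (1/2) * (1 / ‖x - a i‖ ^ 2))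
              = ∑ i : Fin n, ((1/2) * ∑ j, (1 / ‖x - a j‖ ^ 2)
                  + (n:ℝ) * ((1/2) * (1 / ‖x - a i‖ ^ 2))) := by
                refine Finset.sum_congr rfl fun i _ => ?_
                rw [Finset.sum_add_distrib, ← Finset.mul_sum, Finset.sum_const,
                  Finset.card_univ, Fintype.card_fin, nsmul_eq_mul]
            _ = (n:ℝ) * ((1/2) * ∑ j, 1/‖x - a j‖^2)
                  + ∑ i : Fin n, (n:ℝ) * ((1/2) * (1 / ‖x - a i‖ ^ 2)) := by
                rw [Finset.sum_add_distrib, Finset.sum_const, Finset.card_univ,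
                  Fintype.card_fin, nsmul_eq_mul]
            _ = (n:ℝ) * ((1/2) * ∑ j, 1/‖x - a j‖^2)
                  + (n:ℝ) * ((1/2) * ∑ i, (1 / ‖x - a i‖ ^ 2)) := by
                rw [← Finset.mul_sum, ← Finset.mul_sum]
            _ = (n:ℝ) * ∑ i, 1/‖x - a i‖^2 := by ring
        rw [h1]
        ring
end MPaux

/-- With equal weights and `4 - N ≤ s < 0`, `φ_s` is superharmonic away from
the poles, with the explicit formula for `-Δφ_s`. -/
theorem multipolar_superharmonic (N n : ℕ) (hN : 5 ≤ N) (hn : 2 ≤ n)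
    (a : Fin n → EuclideanSpace ℝ (Fin N)) (ha : Function.Injective a)
    (s : ℝ) (hs1 : 4 - (N : ℝ) ≤ s) (hs2 : s < 0)
    (φs : EuclideanSpace ℝ (Fin N) → ℝ)
    (hφs : φs = fun x => ∏ i, ‖x - a i‖ ^ (s / (n : ℝ))) :
    ∀ x : EuclideanSpace ℝ (Fin N), x ∉ Set.range a →
      (-lap φs x
        = (s * (2 - (N : ℝ) - s) / (n : ℝ)) * φs x * (∑ i, 1 / ‖x - a i‖ ^ 2)
          + (s ^ 2 / (n : ℝ) ^ 2) * φs x *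
            ∑ i, ∑ j, if i < j then
              ‖a i - a j‖ ^ 2 / (‖x - a i‖ ^ 2 * ‖x - a j‖ ^ 2)
            else 0)
      ∧ 0 ≤ -lap φs x := by
  subst hφs
  intro x hx
  have hxa : ∀ i, x ≠ a i := fun i h => hx ⟨i, h.symm⟩
  have hn0 : (n : ℝ) ≠ 0 := Nat.cast_ne_zero.mpr (by omega)
  have hr : ∀ i, (0:ℝ) < ‖x - a i‖ := fun i => by
    rw [norm_pos_iff]; exact sub_ne_zero.mpr (hxa i)
  have hL := MP.lap_eq a (s / (n : ℝ)) x hxa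
  have hS2 := MP.S2_eq a x hxa
  have hform : -lap (fun x => ∏ i, ‖x - a i‖ ^ (s / (n : ℝ))) x
      = (s * (2 - (N : ℝ) - s) / (n : ℝ))
          * ((fun x => ∏ i, ‖x - a i‖ ^ (s / (n : ℝ))) x) * (∑ i, 1 / ‖x - a i‖ ^ 2)
        + (s ^ 2 / (n : ℝ) ^ 2) * ((fun x => ∏ i, ‖x - a i‖ ^ (s / (n : ℝ))) x) *
            ∑ i, ∑ j, if i < j then
              ‖a i - a j‖ ^ 2 / (‖x - a i‖ ^ 2 * ‖x - a j‖ ^ 2)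
            else 0 := by
    beta_reduce
    rw [hL, hS2]
    field_simp
    ring
  refine ⟨hform, hform ▸ ?_⟩
  have hP : (0:ℝ) < ∏ i, ‖x - a i‖ ^ (s / (n : ℝ)) :=
    Finset.prod_pos fun i _ => Real.rpow_pos_of_pos (hr i) _
  have hS1 : (0:ℝ) ≤ ∑ i, 1 / ‖x - a i‖ ^ 2 :=
    Finset.sum_nonneg fun i _ => by positivity
  have hT : (0:ℝ) ≤ ∑ i, ∑ j, if i < j then
      ‖a i - a j‖ ^ 2 / (‖x - a i‖ ^ 2 * ‖x - a j‖ ^ 2) else 0 := by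
    refine Finset.sum_nonneg fun i _ => Finset.sum_nonneg fun j _ => ?_
    by_cases h : i < j
    · simp only [h, if_true]; positivity
    · simp [h]
  have hc1 : (0:ℝ) ≤ s * (2 - (N : ℝ) - s) / (n : ℝ) := by
    have hN5 : (5:ℝ) ≤ (N:ℝ) := by exact_mod_cast hN
    have h2 : 2 - (N:ℝ) - s ≤ 0 := by linarith
    have h3 : (0:ℝ) ≤ s * (2 - (N:ℝ) - s) := by
      have := mul_nonneg (neg_nonneg.mpr hs2.le) (neg_nonneg.mpr h2)
      rw [neg_mul_neg] at this
      exact this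
    exact div_nonneg h3 (by positivity)
  have hc2 : (0:ℝ) ≤ s ^ 2 / (n : ℝ) ^ 2 := by positivity
  exact add_nonneg
    (mul_nonneg (mul_nonneg hc1 hP.le) hS1)
    (mul_nonneg (mul_nonneg hc2 hP.le) hT)
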